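/- Lemma 2.5(2): Let (A, m) be a local noetherian ring, let L →^α M →^β N and L →^{α'} M →^{β'} N be two complexes of finite A-modules (i.e., β∘α = 0 and β'∘α' = 0), and let c be a positive integer. Assume that (a) the first sequence is exact at M (im α = ker β), (b) the two complexes agree modulo m^{c+1}, i.e., (α − α')(L) ⊆ m^{c+1}M and (β − β')(M) ⊆ m^{c+1}N, and (c) the condition (AR)_c holds for α and for β. Then the second sequence is also exact at M, i.e., ker β' = im α'. -/
import Mathlib


open IsLocalRing

/-- The Artin–Rees condition `(AR)_c` for a morphism `φ : M → N` of modules over a local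
ring `(A, 𝔪)`: for all `n ≥ c`, `φ(M) ∩ 𝔪^n N ⊆ φ(𝔪^(n-c) M)`. -/
def ArtinReesCond {A : Type*} [CommRing A] [IsLocalRing A]
    {M N : Type*} [AddCommGroup M] [Module A M] [AddCommGroup N] [Module A N]
    (c : ℕ) (φ : M →ₗ[A] N) : Prop :=
  ∀ n : ℕ, c ≤ n →
    LinearMap.range φ ⊓ ((maximalIdeal A) ^ n • ⊤ : Submodule A N) ≤
      Submodule.map φ ((maximalIdeal A) ^ (n - c) • ⊤ : Submodule A M)

/-- If `f` takes values in `I^k • ⊤`, then `f` maps `I^n • ⊤` into `I^(n+k) • ⊤`. -/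
lemma aux_smul_map {A : Type*} [CommRing A] {M N : Type*} [AddCommGroup M] [Module A M]
    [AddCommGroup N] [Module A N] (f : M →ₗ[A] N) (I : Ideal A) (k n : ℕ)
    (hf : ∀ x, f x ∈ (I ^ k • ⊤ : Submodule A N)) {w : M}
    (hw : w ∈ (I ^ n • ⊤ : Submodule A M)) :
    f w ∈ (I ^ (n + k) • ⊤ : Submodule A N) := by
  have h1 : f w ∈ Submodule.map f (I ^ n • ⊤ : Submodule A M) := Submodule.mem_map_of_mem hw
  rw [Submodule.map_smul''] at h1
  have h2 : Submodule.map f ⊤ ≤ (I ^ k • ⊤ : Submodule A N) := by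
    rintro y ⟨x, -, rfl⟩; exact hf x
  have h3 : (I ^ n • (I ^ k • ⊤) : Submodule A N) = (I ^ (n + k) • ⊤ : Submodule A N) := by
    rw [← Submodule.smul_assoc, smul_eq_mul, ← pow_add]
  exact h3 ▸ (Submodule.smul_mono le_rfl h2 h1)


/-- Krull intersection theorem for a finite module over a noetherian local ring,
universe-polymorphic version obtained by transferring along a finite presentation. -/
lemma krull_inter_zero {A : Type*} [CommRing A] [IsLocalRing A] [IsNoetherianRing A]
    {Q : Type*} [AddCommGroup Q] [Module A Q] [Module.Finite A Q] (x : Q)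
    (hx : ∀ n : ℕ, x ∈ ((maximalIdeal A) ^ n • ⊤ : Submodule A Q)) : x = 0 := by
  obtain ⟨k, π, hπ⟩ := Module.Finite.exists_fin' A Q
  let e : ((Fin k → A) ⧸ LinearMap.ker π) ≃ₗ[A] Q := π.quotKerEquivOfSurjective hπ
  have hy : ∀ n : ℕ, e.symm x ∈
      ((maximalIdeal A) ^ n • ⊤ : Submodule A ((Fin k → A) ⧸ LinearMap.ker π)) := by
    intro n
    have h1 : e.symm x ∈ Submodule.map (e.symm : Q →ₗ[A] ((Fin k → A) ⧸ LinearMap.ker π))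
        ((maximalIdeal A) ^ n • ⊤ : Submodule A Q) := Submodule.mem_map_of_mem (hx n)
    rwa [Submodule.map_smul'', Submodule.map_top, LinearEquiv.range] at h1
  have hbot : (⨅ i : ℕ, (maximalIdeal A) ^ i • ⊤ :
      Submodule A ((Fin k → A) ⧸ LinearMap.ker π)) = ⊥ := by
    exact Ideal.iInf_pow_smul_eq_bot_of_isLocalRing (I := maximalIdeal A)
      (Ideal.IsMaximal.ne_top (maximalIdeal.isMaximal A))
  have h0 : e.symm x = 0 := by
    have : e.symm x ∈ (⨅ i : ℕ, (maximalIdeal A) ^ i • ⊤ :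
        Submodule A ((Fin k → A) ⧸ LinearMap.ker π)) := Submodule.mem_iInf _ |>.mpr hy
    rwa [hbot, Submodule.mem_bot] at this
  have := congrArg e h0
  simpa using this

/-- Lemma 2.5(2): under the hypotheses of Lemma 2.5, the second complex is also exact at `M`. -/
theorem lemma_2_5_part2 {A : Type*} [CommRing A] [IsLocalRing A] [IsNoetherianRing A]
    {L M N : Type*} [AddCommGroup L] [Module A L] [AddCommGroup M] [Module A M]
    [AddCommGroup N] [Module A N]
    [Module.Finite A L] [Module.Finite A M] [Module.Finite A N]
    (α α' : L →ₗ[A] M) (β β' : M →ₗ[A] N)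
    (hcx : β.comp α = 0) (hcx' : β'.comp α' = 0)
    (c : ℕ) (hc : 0 < c)
    (hexact : LinearMap.range α = LinearMap.ker β)
    (hα : ∀ x : L, α x - α' x ∈ ((maximalIdeal A) ^ (c + 1) • ⊤ : Submodule A M))
    (hβ : ∀ x : M, β x - β' x ∈ ((maximalIdeal A) ^ (c + 1) • ⊤ : Submodule A N))
    (hARα : ArtinReesCond c α) (hARβ : ArtinReesCond c β) :
    LinearMap.range α' = LinearMap.ker β' := by
  have key : ∀ n : ℕ, ∀ x : M, β' x = 0 →
      x ∈ LinearMap.range α' ⊔ ((maximalIdeal A) ^ n • ⊤ : Submodule A M) := by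
    intro n
    induction n with
    | zero =>
      intro x _
      apply Submodule.mem_sup_right
      simp
    | succ n ih =>
      intro x hx
      obtain ⟨a, ha, w, hw, hxaw⟩ := Submodule.mem_sup.mp (ih x hx)
      obtain ⟨u, rfl⟩ := ha
      have hβ'α' : β' (α' u) = 0 := by
        have := LinearMap.congr_fun hcx' u
        simpa using this
      have hβ'w : β' w = 0 := by
        have : β' (α' u + w) = 0 := hxaw ▸ hx
        simpa [map_add, hβ'α'] using this
      -- β w lies deep in the filtration
      have hβw : β w ∈ ((maximalIdeal A) ^ (n + (c + 1)) • ⊤ : Submodule A N) := by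
        have hβeq : β w = (β - β') w := by simp [hβ'w]
        rw [hβeq]
        exact aux_smul_map (β - β') _ (c + 1) n (fun x => by simpa using hβ x) hw
      have h1 : β w ∈ LinearMap.range β ⊓ ((maximalIdeal A) ^ (n + (c + 1)) • ⊤ : Submodule A N) :=
        ⟨⟨w, rfl⟩, hβw⟩
      obtain ⟨v, hv, hvw⟩ := hARβ (n + (c + 1)) (by omega) h1
      have hv' : v ∈ ((maximalIdeal A) ^ (n + 1) • ⊤ : Submodule A M) := by
        have hne : n + (c + 1) - c = n + 1 := by omega
        rwa [hne] at hv
      have hwv : w - v ∈ LinearMap.range α := by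
        rw [hexact, LinearMap.mem_ker, map_sub, hvw, sub_self]
      obtain ⟨t, ht, hαt⟩ : ∃ t ∈ ((maximalIdeal A) ^ (n - c) • ⊤ : Submodule A L),
          α t = w - v := by
        rcases le_or_gt c n with h | h
        · have hmem : w - v ∈ LinearMap.range α ⊓ ((maximalIdeal A) ^ n • ⊤ : Submodule A M) := by
            refine ⟨hwv, Submodule.sub_mem _ hw ?_⟩
            exact Submodule.smul_mono_left (Ideal.pow_le_pow_right (by omega)) hv'
          obtain ⟨t, ht, hαt⟩ := hARα n h hmem
          exact ⟨t, ht, hαt⟩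
        · obtain ⟨t, hαt⟩ := hwv
          refine ⟨t, ?_, hαt⟩
          have h0 : n - c = 0 := by omega
          simp [h0]
      have hdiff : α t - α' t ∈ ((maximalIdeal A) ^ (n + 1) • ⊤ : Submodule A M) := by
        have h4 := aux_smul_map (α - α') (maximalIdeal A) (c + 1) (n - c)
          (fun x => by simpa using hα x) ht
        have hle : ((maximalIdeal A) ^ (n - c + (c + 1)) • ⊤ : Submodule A M) ≤
            ((maximalIdeal A) ^ (n + 1) • ⊤ : Submodule A M) :=
          Submodule.smul_mono_left (Ideal.pow_le_pow_right (by omega))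
        exact hle (by simpa using h4)
      rw [← hxaw]
      refine Submodule.mem_sup.mpr ⟨α' u + α' t, ?_, (α t - α' t) + v, ?_, ?_⟩
      · exact Submodule.add_mem _ ⟨u, rfl⟩ ⟨t, rfl⟩
      · exact Submodule.add_mem _ hdiff hv'
      · rw [hαt]; abel
  refine le_antisymm (LinearMap.range_le_ker_iff.mpr hcx') ?_
  intro x hx
  have hx' : β' x = 0 := hx
  have hmem : ∀ i : ℕ, (Submodule.mkQ (LinearMap.range α')) x ∈
      ((maximalIdeal A) ^ i • ⊤ : Submodule A (M ⧸ LinearMap.range α')) := by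
    intro i
    obtain ⟨a, ha, w, hw, hxaw⟩ := Submodule.mem_sup.mp (key i x hx')
    have hmk : (Submodule.mkQ (LinearMap.range α')) x =
        (Submodule.mkQ (LinearMap.range α')) w := by
      rw [← hxaw, map_add]
      have : (Submodule.mkQ (LinearMap.range α')) a = 0 := by
        rwa [Submodule.mkQ_apply, Submodule.Quotient.mk_eq_zero]
      rw [this, zero_add]
    rw [hmk]
    have h5 : (Submodule.mkQ (LinearMap.range α')) w ∈
        Submodule.map (Submodule.mkQ (LinearMap.range α'))
          ((maximalIdeal A) ^ i • ⊤ : Submodule A M) := Submodule.mem_map_of_mem hw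
    rwa [Submodule.map_smul'', Submodule.map_top, Submodule.range_mkQ] at h5
  have hz := krull_inter_zero _ hmem
  rwa [Submodule.mkQ_apply, Submodule.Quotient.mk_eq_zero] at hz
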